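/- Let X, Y, U_1, …, U_M, and Z̃ = (Z̃^{(1)}, …, Z̃^{(K)}) be finitely-valued random variables on a common probability space P, and let C = (C_{j,k})_{j ≤ M, k ≤ K} be {0,1}-valued random variables. Assume: (a) H(Y | X, U) = 0, where U = (U_1, …, U_M); (b) U_1, …, U_M are mutually conditionally independent given X; (c) H(U | X) = H(Y | X); (d) C is independent of (X, Y, U), P(C_{j,k} = 1) = α ∈ (0,1) for all j, k, and for each fixed j the family {C_{j,k}}_{k=1}^K is mutually independent; (e) for every coverage configuration c with P(C = c) > 0 and every j such that c_{j,k} = 1 for some k, the conditional entropy H(U_j | X, Z̃), computed under the conditional measure P(· | C = c), equals 0. Then the expected residual uncertainty satisfies ∑_c P(C = c) · H(Y | X, Z̃) computed under P(· | C = c) ≤ (1 − α)^K · H(Y | X) ≤ e^{−αK} · H(Y | X). -/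

import Mathlib

open MeasureTheory ProbabilityTheory

/-- Shannon entropy (in nats) of a finitely-valued random variable `X` under `μ`. -/
noncomputable def entH {Ω : Type*} [MeasurableSpace Ω] (μ : Measure Ω)
    {S : Type*} [Fintype S] (X : Ω → S) : ℝ :=
  ∑ s : S, Real.negMulLog ((μ (X ⁻¹' {s})).toReal)

/-- Conditional Shannon entropy `H(Y | X) = H(X, Y) - H(X)`. -/
noncomputable def condEntH {Ω : Type*} [MeasurableSpace Ω] (μ : Measure Ω)
    {S T : Type*} [Fintype S] [Fintype T] (Y : Ω → T) (X : Ω → S) : ℝ :=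
  entH μ (fun ω => (X ω, Y ω)) - entH μ X

/-- Conditional mutual information `I(A; B | C) = H(A | C) - H(A | (B, C))`. -/
noncomputable def condMI {Ω : Type*} [MeasurableSpace Ω] (μ : Measure Ω)
    {A B C : Type*} [Fintype A] [Fintype B] [Fintype C]
    (fA : Ω → A) (fB : Ω → B) (fC : Ω → C) : ℝ :=
  condEntH μ fA fC - condEntH μ fA (fun ω => (fB ω, fC ω))


set_option linter.unusedSectionVars false
set_option maxHeartbeats 1000000
section Foundations
open Real
open scoped Classical

noncomputable def pm {Ω : Type*} [MeasurableSpace Ω] (μ : Measure Ω)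
    {S : Type*} (X : Ω → S) (s : S) : ℝ := (μ (X ⁻¹' {s})).toReal

variable {Ω : Type*} [MeasurableSpace Ω] (μ : Measure Ω) [IsProbabilityMeasure μ]
variable {S T R V : Type*} [Fintype S] [MeasurableSpace S] [MeasurableSingletonClass S]
  [Fintype T] [MeasurableSpace T] [MeasurableSingletonClass T]
  [Fintype R] [MeasurableSpace R] [MeasurableSingletonClass R]
  [Fintype V] [MeasurableSpace V] [MeasurableSingletonClass V]

omit [IsProbabilityMeasure μ] in
lemma pm_nonneg (X : Ω → S) (s : S) : 0 ≤ pm μ X s := ENNReal.toReal_nonneg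

lemma meas_preimage_finset (X : Ω → S) (hX : Measurable X) (A : Finset S) :
    μ (X ⁻¹' ↑A) = ∑ s ∈ A, μ (X ⁻¹' {s}) := by
  have h : (X ⁻¹' ↑A) = ⋃ s ∈ A, X ⁻¹' {s} := by ext ω; simp
  rw [h, measure_biUnion_finset]
  · intro a _ b _ hab
    exact Set.disjoint_left.2 (fun ω h1 h2 => hab (by simp_all))
  · exact fun s _ => hX (measurableSet_singleton s)

lemma pm_fin_sum (X : Ω → S) (hX : Measurable X) (A : Finset S) :
    (μ (X ⁻¹' ↑A)).toReal = ∑ s ∈ A, pm μ X s := by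
  rw [meas_preimage_finset μ X hX A, ENNReal.toReal_sum (fun s _ => measure_ne_top μ _)]
  rfl

lemma sum_pm (X : Ω → S) (hX : Measurable X) : ∑ s : S, pm μ X s = 1 := by
  have h := pm_fin_sum μ X hX Finset.univ
  simp only [Finset.coe_univ, Set.preimage_univ] at h
  rw [← h]; simp

lemma pm_le_one (X : Ω → S) (s : S) : pm μ X s ≤ 1 := by
  have h := measure_mono (Set.subset_univ (X ⁻¹' {s})) (μ := μ)
  have := ENNReal.toReal_mono (by simp) h
  simpa [pm] using this

lemma pm_map (X : Ω → S) (hX : Measurable X) (g : S → T) (t : T) :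
    pm μ (fun ω => g (X ω)) t = ∑ s ∈ Finset.univ.filter (fun s => g s = t), pm μ X s := by
  have h : ((fun ω => g (X ω)) ⁻¹' {t}) = X ⁻¹' ↑(Finset.univ.filter (fun s => g s = t)) := by
    ext ω; simp
  rw [pm, h, pm_fin_sum μ X hX]

omit [IsProbabilityMeasure μ] in
lemma entH_eq (X : Ω → S) : entH μ X = ∑ s : S, Real.negMulLog (pm μ X s) := rfl

lemma entH_nonneg (X : Ω → S) : 0 ≤ entH μ X := by
  rw [entH_eq]
  exact Finset.sum_nonneg fun s _ => negMulLog_nonneg (pm_nonneg μ X s) (pm_le_one μ X s)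

lemma entH_comp_inj (X : Ω → S) (hX : Measurable X) (g : S → T) (hg : Function.Injective g) :
    entH μ (fun ω => g (X ω)) = entH μ X := by
  rw [entH_eq, entH_eq]
  have key : ∀ t : T, Real.negMulLog (pm μ (fun ω => g (X ω)) t)
      = ∑ s ∈ Finset.univ.filter (fun s => g s = t), Real.negMulLog (pm μ X s) := by
    intro t
    rw [pm_map μ X hX g t]
    rcases Finset.eq_empty_or_nonempty (Finset.univ.filter (fun s => g s = t)) with h | h
    · simp [h, Real.negMulLog_zero]
    · obtain ⟨s0, hs0⟩ := h
      have : Finset.univ.filter (fun s => g s = t) = {s0} := by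
        apply Finset.eq_singleton_iff_unique_mem.2
        refine ⟨hs0, fun s hs => ?_⟩
        simp only [Finset.mem_filter] at hs hs0
        exact hg (hs.2.trans hs0.2.symm)
      simp [this]
  rw [Finset.sum_congr rfl (fun t _ => key t),
    Finset.sum_fiberwise_eq_sum_filter Finset.univ Finset.univ g
      (fun s => Real.negMulLog (pm μ X s))]
  simp

end Foundations


section Layer2
open Real
open scoped Classical
variable {Ω : Type*} [MeasurableSpace Ω] (μ : Measure Ω) [IsProbabilityMeasure μ]
variable {S T R V : Type*} [Fintype S] [MeasurableSpace S] [MeasurableSingletonClass S]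
  [Fintype T] [MeasurableSpace T] [MeasurableSingletonClass T]
  [Fintype R] [MeasurableSpace R] [MeasurableSingletonClass R]
  [Fintype V] [MeasurableSpace V] [MeasurableSingletonClass V]

lemma cond_of_null {s : Set Ω} (h : μ s = 0) : μ[|s] = 0 := by
  rw [ProbabilityTheory.cond, Measure.restrict_eq_zero.2 h, smul_zero]

lemma cond_pm_eq (X : Ω → S) (hX : Measurable X) (A : Ω → T) (x : S) (a : T) :
    pm μ (fun ω => (X ω, A ω)) (x, a) = pm μ X x * pm (μ[|X ⁻¹' {x}]) A a := by
  have hset : ((fun ω => (X ω, A ω)) ⁻¹' {(x, a)}) = X ⁻¹' {x} ∩ A ⁻¹' {a} := by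
    ext ω
    simp only [Set.mem_preimage, Set.mem_singleton_iff, Set.mem_inter_iff, Prod.mk.injEq]
  by_cases h : μ (X ⁻¹' {x}) = 0
  · have h2 : μ (X ⁻¹' {x} ∩ A ⁻¹' {a}) = 0 :=
      measure_mono_null Set.inter_subset_left h
    simp [pm, hset, h, h2]
  · rw [pm, hset, pm, pm, cond_apply (hX (measurableSet_singleton x))]
    rw [← ENNReal.toReal_mul, ← mul_assoc, ENNReal.mul_inv_cancel h (measure_ne_top μ _),
      one_mul]

lemma entH_zero_measure (A : Ω → T) : entH (0 : Measure Ω) A = 0 := by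
  simp [entH]

lemma entH_cond_nonneg (A : Ω → T) {s : Set Ω} : 0 ≤ entH (μ[|s]) A := by
  by_cases h : μ s = 0
  · rw [cond_of_null μ h, entH_zero_measure]
  · haveI := cond_isProbabilityMeasure (μ := μ) h
    exact entH_nonneg _ A

lemma condEntH_decomp (X : Ω → S) (hX : Measurable X) (A : Ω → T) (hA : Measurable A) :
    condEntH μ A X = ∑ x : S, pm μ X x * entH (μ[|X ⁻¹' {x}]) A := by
  have hpair : entH μ (fun ω => (X ω, A ω))
      = entH μ X + ∑ x : S, pm μ X x * entH (μ[|X ⁻¹' {x}]) A := by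
    rw [entH_eq, entH_eq, Fintype.sum_prod_type]
    have hterm : ∀ x : S, ∑ a : T, Real.negMulLog (pm μ (fun ω => (X ω, A ω)) (x, a))
        = Real.negMulLog (pm μ X x) + pm μ X x * entH (μ[|X ⁻¹' {x}]) A := by
      intro x
      by_cases h : μ (X ⁻¹' {x}) = 0
      · have h0 : pm μ X x = 0 := by simp [pm, h]
        have : ∀ a : T, pm μ (fun ω => (X ω, A ω)) (x, a) = 0 := by
          intro a; rw [cond_pm_eq μ X hX A, h0, zero_mul]
        simp [this, h0, cond_of_null μ h, entH_zero_measure]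
      · haveI := cond_isProbabilityMeasure (μ := μ) h
        have hsum := sum_pm (μ[|X ⁻¹' {x}]) A hA
        calc ∑ a : T, Real.negMulLog (pm μ (fun ω => (X ω, A ω)) (x, a))
            = ∑ a : T, (pm (μ[|X ⁻¹' {x}]) A a * Real.negMulLog (pm μ X x)
              + pm μ X x * Real.negMulLog (pm (μ[|X ⁻¹' {x}]) A a)) := by
              refine Finset.sum_congr rfl fun a _ => ?_
              rw [cond_pm_eq μ X hX A, Real.negMulLog_mul]
          _ = Real.negMulLog (pm μ X x) + pm μ X x * entH (μ[|X ⁻¹' {x}]) A := by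
              rw [Finset.sum_add_distrib, ← Finset.sum_mul, hsum, one_mul, ← Finset.mul_sum,
                entH_eq]
    rw [Finset.sum_congr rfl fun x _ => hterm x, Finset.sum_add_distrib]
  rw [condEntH, hpair]; ring

lemma condEntH_nonneg (A : Ω → T) (hA : Measurable A) (X : Ω → S) (hX : Measurable X) :
    0 ≤ condEntH μ A X := by
  rw [condEntH_decomp μ X hX A hA]
  exact Finset.sum_nonneg fun x _ => mul_nonneg (pm_nonneg μ X x) (entH_cond_nonneg μ A)

lemma pm_fst (X : Ω → S) (hX : Measurable X) (Z : Ω → R) (hZ : Measurable Z) (x : S) :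
    pm μ X x = ∑ z : R, pm μ (fun ω => (X ω, Z ω)) (x, z) := by
  have hset : X ⁻¹' {x} = (fun ω => (X ω, Z ω)) ⁻¹' ↑(({x} : Finset S) ×ˢ (Finset.univ : Finset R)) := by
    ext ω
    simp only [Set.mem_preimage, Set.mem_singleton_iff, Finset.coe_product, Finset.coe_singleton,
      Finset.coe_univ, Set.singleton_prod, Set.mem_image, Set.mem_univ]
    constructor
    · intro h; exact ⟨Z ω, trivial, by rw [h]⟩
    · rintro ⟨z, -, h⟩; exact congrArg Prod.fst h.symm
  rw [pm, hset, pm_fin_sum μ _ (hX.prodMk hZ), Finset.sum_product, Finset.sum_singleton]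

lemma pm_marg_mid (X : Ω → S) (hX : Measurable X) (Z : Ω → R) (hZ : Measurable Z)
    (Y : Ω → T) (hY : Measurable Y) (x : S) (y : T) :
    pm μ (fun ω => (X ω, Y ω)) (x, y)
      = ∑ z : R, pm μ (fun ω => ((X ω, Z ω), Y ω)) ((x, z), y) := by
  have hset : (fun ω => (X ω, Y ω)) ⁻¹' {(x, y)}
      = (fun ω => ((X ω, Z ω), Y ω)) ⁻¹'
        ↑((({x} : Finset S) ×ˢ (Finset.univ : Finset R)) ×ˢ ({y} : Finset T)) := by
    ext ω
    simp only [Set.mem_preimage, Set.mem_singleton_iff, Finset.coe_sort_coe, Finset.mem_coe,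
      Finset.mem_product, Finset.mem_singleton, Finset.mem_univ, Prod.mk.injEq, and_true]
    try tauto
  rw [pm, hset, pm_fin_sum μ _ (((hX.prodMk hZ)).prodMk hY), Finset.sum_product,
    Finset.sum_product, Finset.sum_singleton]
  simp

/-- Conditioning on more reduces conditional entropy (Jensen). -/
lemma condEntH_pair_le (Y : Ω → T) (hY : Measurable Y) (X : Ω → S) (hX : Measurable X)
    (Z : Ω → R) (hZ : Measurable Z) :
    condEntH μ Y (fun ω => (X ω, Z ω)) ≤ condEntH μ Y X := by
  set W := fun ω => (X ω, Z ω) with hW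
  have hWm : Measurable W := hX.prodMk hZ
  rw [condEntH_decomp μ W hWm Y hY, condEntH_decomp μ X hX Y hY, Fintype.sum_prod_type]
  refine Finset.sum_le_sum fun x _ => ?_
  by_cases h : μ (X ⁻¹' {x}) = 0
  · have hz : ∀ z : R, pm μ W (x, z) = 0 := by
      intro z
      have : μ (W ⁻¹' {(x, z)}) = 0 := by
        refine measure_mono_null ?_ h
        intro ω hω
        simp only [Set.mem_preimage, Set.mem_singleton_iff, hW, Prod.ext_iff] at hω ⊢
        exact hω.1
      simp [pm, this]
    have h0 : pm μ X x = 0 := by simp [pm, h]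
    simp [hz, h0]
  · have hpmx : 0 < pm μ X x := by
      simp only [pm]
      exact ENNReal.toReal_pos h (measure_ne_top μ _)
    -- weights
    set w : R → ℝ := fun z => pm μ W (x, z) / pm μ X x with hw
    have hw0 : ∀ z, 0 ≤ w z := fun z => div_nonneg (pm_nonneg μ W _) hpmx.le
    have hw1 : ∑ z : R, w z = 1 := by
      rw [hw, ← Finset.sum_div, ← pm_fst μ X hX Z hZ x, div_self hpmx.ne']
    -- mixture identity
    have hmix : ∀ y : T, pm (μ[|X ⁻¹' {x}]) Y y
        = ∑ z : R, w z * pm (μ[|W ⁻¹' {(x, z)}]) Y y := by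
      intro y
      have h1 : pm μ X x * pm (μ[|X ⁻¹' {x}]) Y y = pm μ (fun ω => (X ω, Y ω)) (x, y) :=
        (cond_pm_eq μ X hX Y x y).symm
      have h2 : pm μ (fun ω => (X ω, Y ω)) (x, y)
          = ∑ z : R, pm μ W (x, z) * pm (μ[|W ⁻¹' {(x, z)}]) Y y := by
        rw [pm_marg_mid μ X hX Z hZ Y hY x y]
        exact Finset.sum_congr rfl fun z _ => cond_pm_eq μ W hWm Y (x, z) y
      have h3 := h1.trans h2
      calc pm (μ[|X ⁻¹' {x}]) Y y
          = (pm μ X x)⁻¹ * (pm μ X x * pm (μ[|X ⁻¹' {x}]) Y y) := by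
            field_simp
        _ = (pm μ X x)⁻¹ * ∑ z : R, pm μ W (x, z) * pm (μ[|W ⁻¹' {(x, z)}]) Y y := by
            rw [h3]
        _ = ∑ z : R, w z * pm (μ[|W ⁻¹' {(x, z)}]) Y y := by
            rw [Finset.mul_sum]
            refine Finset.sum_congr rfl fun z _ => ?_
            show (pm μ X x)⁻¹ * (pm μ W (x, z) * _) = pm μ W (x, z) / pm μ X x * _
            ring
    -- Jensen per coordinate
    have hjen : ∀ y : T, ∑ z : R, w z * Real.negMulLog (pm (μ[|W ⁻¹' {(x, z)}]) Y y)
        ≤ Real.negMulLog (pm (μ[|X ⁻¹' {x}]) Y y) := by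
      intro y
      have := Real.concaveOn_negMulLog.le_map_sum (t := Finset.univ)
        (w := w) (p := fun z => pm (μ[|W ⁻¹' {(x, z)}]) Y y)
        (fun z _ => hw0 z) hw1 (fun z _ => pm_nonneg _ _ _)
      simpa [hmix y, smul_eq_mul] using this
    calc ∑ z : R, pm μ W (x, z) * entH (μ[|W ⁻¹' {(x, z)}]) Y
        = pm μ X x * ∑ z : R, w z * entH (μ[|W ⁻¹' {(x, z)}]) Y := by
          rw [Finset.mul_sum]
          refine Finset.sum_congr rfl fun z _ => ?_
          rw [hw]; field_simp
      _ ≤ pm μ X x * entH (μ[|X ⁻¹' {x}]) Y := by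
          refine mul_le_mul_of_nonneg_left ?_ hpmx.le
          rw [entH_eq]
          calc ∑ z : R, w z * entH (μ[|W ⁻¹' {(x, z)}]) Y
              = ∑ y : T, ∑ z : R, w z * Real.negMulLog (pm (μ[|W ⁻¹' {(x, z)}]) Y y) := by
                rw [Finset.sum_comm]
                exact Finset.sum_congr rfl fun z _ => by rw [entH_eq, Finset.mul_sum]
            _ ≤ ∑ y : T, Real.negMulLog (pm (μ[|X ⁻¹' {x}]) Y y) :=
                Finset.sum_le_sum fun y _ => hjen y

end Layer2


section Layer3
open Real
open scoped Classical
variable {Ω : Type*} [MeasurableSpace Ω] (μ : Measure Ω) [IsProbabilityMeasure μ]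
variable {S T R V : Type*} [Fintype S] [MeasurableSpace S] [MeasurableSingletonClass S]
  [Fintype T] [MeasurableSpace T] [MeasurableSingletonClass T]
  [Fintype R] [MeasurableSpace R] [MeasurableSingletonClass R]
  [Fintype V] [MeasurableSpace V] [MeasurableSingletonClass V]

lemma condEntH_comp_left (Y : Ω → T) (hY : Measurable Y) (X : Ω → S) (hX : Measurable X)
    (f : T → R) (hf : Function.Injective f) :
    condEntH μ (fun ω => f (Y ω)) X = condEntH μ Y X := by
  unfold condEntH
  congr 1
  have h1 : (fun ω => (X ω, f (Y ω))) = fun ω => (fun p : S × T => (p.1, f p.2)) ((X ω, Y ω)) := rfl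
  rw [h1]
  exact entH_comp_inj μ (fun ω => (X ω, Y ω)) (hX.prodMk hY) (fun p : S × T => (p.1, f p.2))
    (fun p q hpq => by
      obtain ⟨ha, hb⟩ := Prod.ext_iff.1 hpq
      exact Prod.ext ha (hf hb))

lemma condEntH_comp_right (Y : Ω → T) (hY : Measurable Y) (X : Ω → S) (hX : Measurable X)
    (g : S → R) (hg : Function.Injective g) :
    condEntH μ Y (fun ω => g (X ω)) = condEntH μ Y X := by
  unfold condEntH
  have h1 : (fun ω => (g (X ω), Y ω)) = fun ω => (fun p : S × T => (g p.1, p.2)) ((X ω, Y ω)) := rfl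
  rw [h1, entH_comp_inj μ X hX g hg]
  congr 1
  exact entH_comp_inj μ (fun ω => (X ω, Y ω)) (hX.prodMk hY) (fun p : S × T => (g p.1, p.2))
    (fun p q hpq => by
      obtain ⟨ha, hb⟩ := Prod.ext_iff.1 hpq
      exact Prod.ext (hg ha) hb)

lemma condEntH_chain (A : Ω → T) (hA : Measurable A) (B : Ω → R) (hB : Measurable B)
    (W : Ω → S) (hW : Measurable W) :
    condEntH μ (fun ω => (A ω, B ω)) W
      = condEntH μ A W + condEntH μ B (fun ω => (W ω, A ω)) := by
  unfold condEntH
  have h1 : (fun ω => (W ω, (A ω, B ω)))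
      = fun ω => (Equiv.prodAssoc S T R) (((W ω, A ω), B ω)) := rfl
  rw [h1, entH_comp_inj μ _ (((hW.prodMk hA)).prodMk hB) _ (Equiv.prodAssoc S T R).injective]
  ring

lemma condEntH_swap_target (A : Ω → T) (hA : Measurable A) (B : Ω → R) (hB : Measurable B)
    (W : Ω → S) (hW : Measurable W) :
    condEntH μ (fun ω => (A ω, B ω)) W = condEntH μ (fun ω => (B ω, A ω)) W := by
  have : (fun ω => (B ω, A ω)) = fun ω => Prod.swap ((A ω, B ω)) := rfl
  rw [this, condEntH_comp_left μ _ (hA.prodMk hB) W hW Prod.swap Prod.swap_injective]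

/-- `H(Y|W) ≤ H(A|W) + H(Y|(W,A))`. -/
lemma condEntH_le_add (Y : Ω → T) (hY : Measurable Y) (A : Ω → R) (hA : Measurable A)
    (W : Ω → S) (hW : Measurable W) :
    condEntH μ Y W ≤ condEntH μ A W + condEntH μ Y (fun ω => (W ω, A ω)) := by
  have h1 := condEntH_chain μ A hA Y hY W hW
  have h2 := condEntH_chain μ Y hY A hA W hW
  have h3 := condEntH_swap_target μ A hA Y hY W hW
  have h4 : 0 ≤ condEntH μ A (fun ω => (W ω, Y ω)) :=
    condEntH_nonneg μ A hA _ (hW.prodMk hY)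
  linarith

lemma condEntH_fun_zero (W : Ω → S) (hW : Measurable W) (h : S → T) :
    condEntH μ (fun ω => h (W ω)) W = 0 := by
  unfold condEntH
  have h1 : (fun ω => (W ω, h (W ω))) = fun ω => (fun s => (s, h s)) (W ω) := rfl
  rw [h1, entH_comp_inj μ W hW (fun s => (s, h s))
    (fun a b hab => (Prod.ext_iff.1 hab).1), sub_self]

lemma condEntH_eq_zero_of_fun (A : Ω → T) (W : Ω → S) (hW : Measurable W) (h : S → T)
    (hfun : ∀ ω, A ω = h (W ω)) : condEntH μ A W = 0 := by
  have : A = fun ω => h (W ω) := funext hfun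
  rw [this, condEntH_fun_zero μ W hW h]

/-- drop extra conditioning through injective recode: `H(Y | g∘W) = H(Y|W)` not needed;
this gives `H(Y|(X,Z)) ≤ H(Y|X)` in the reordered form `H(Y|(Z,X)) ≤ H(Y|X)`. -/
lemma condEntH_pair_le' (Y : Ω → T) (hY : Measurable Y) (X : Ω → S) (hX : Measurable X)
    (Z : Ω → R) (hZ : Measurable Z) :
    condEntH μ Y (fun ω => (Z ω, X ω)) ≤ condEntH μ Y X := by
  have : condEntH μ Y (fun ω => (Z ω, X ω)) = condEntH μ Y (fun ω => (X ω, Z ω)) := by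
    have h1 : (fun ω => (Z ω, X ω)) = fun ω => Prod.swap ((X ω, Z ω)) := rfl
    rw [h1, condEntH_comp_right μ Y hY _ (hX.prodMk hZ) Prod.swap Prod.swap_injective]
  rw [this]
  exact condEntH_pair_le μ Y hY X hX Z hZ

end Layer3


section Layer4
open Real
open scoped Classical
variable {Ω : Type*} [MeasurableSpace Ω]
variable {S T R : Type*} [Fintype S] [MeasurableSpace S] [MeasurableSingletonClass S]
  [Fintype T] [MeasurableSpace T] [MeasurableSingletonClass T]
  [Fintype R] [MeasurableSpace R] [MeasurableSingletonClass R]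

/-- Conditional subadditivity for tuples. -/
lemma condEntH_tuple_le_sum (μ : Measure Ω) [IsProbabilityMeasure μ] :
    ∀ (n : ℕ) (𝓤 : Fin n → Type u_5) (_ : ∀ j, Fintype (𝓤 j))
      (_ : ∀ j, MeasurableSpace (𝓤 j)) (_ : ∀ j, MeasurableSingletonClass (𝓤 j))
      (F : ∀ j, Ω → 𝓤 j) (_ : ∀ j, Measurable (F j))
      (W : Ω → S) (_ : Measurable W),
      condEntH μ (fun ω (j : Fin n) => F j ω) W ≤ ∑ j, condEntH μ (F j) W := by
  intro n
  induction n with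
  | zero =>
    intro 𝓤 _ _ _ F hF W hW
    rw [Finset.univ_eq_empty, Finset.sum_empty]
    refine le_of_eq (condEntH_eq_zero_of_fun μ _ W hW (fun _ j => j.elim0) ?_)
    intro ω; exact funext fun j => j.elim0
  | succ n ih =>
    intro 𝓤 i1 i2 i3 F hF W hW
    set tail : Ω → (∀ i : Fin n, 𝓤 i.succ) := fun ω i => F i.succ ω with htail
    have htailm : Measurable tail := measurable_pi_lambda _ (fun i => hF i.succ)
    have htuplem : Measurable (fun ω (j : Fin (n+1)) => F j ω) :=
      measurable_pi_lambda _ (fun j => hF j)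
    have hrecode : condEntH μ (fun ω (j : Fin (n+1)) => F j ω) W
        = condEntH μ (fun ω => (F 0 ω, tail ω)) W := by
      have hg : Function.Injective
          (fun u : (∀ j : Fin (n+1), 𝓤 j) => (u 0, fun i : Fin n => u i.succ)) := by
        intro u v huv
        obtain ⟨h0, hs⟩ := Prod.ext_iff.1 huv
        funext j
        refine Fin.cases ?_ ?_ j
        · exact h0
        · intro i; exact congrFun hs i
      have := condEntH_comp_left μ (fun ω (j : Fin (n+1)) => F j ω) htuplem W hW _ hg
      exact this.symm
    rw [hrecode, condEntH_chain μ (F 0) (hF 0) tail htailm W hW, Fin.sum_univ_succ]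
    have h1 : condEntH μ tail (fun ω => (W ω, F 0 ω)) ≤ condEntH μ tail W :=
      condEntH_pair_le μ tail htailm W hW (F 0) (hF 0)
    have h2 : condEntH μ tail W ≤ ∑ i : Fin n, condEntH μ (F i.succ) W :=
      ih (fun i => 𝓤 i.succ) (fun i => i1 i.succ) (fun i => i2 i.succ) (fun i => i3 i.succ)
        (fun i => F i.succ) (fun i => hF i.succ) W hW
    linarith

lemma entH_pair_add (μ : Measure Ω) [IsProbabilityMeasure μ]
    (A : Ω → S) (hA : Measurable A) (B : Ω → T) (hB : Measurable B)
    (hprod : ∀ s t, pm μ (fun ω => (A ω, B ω)) (s, t) = pm μ A s * pm μ B t) :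
    entH μ (fun ω => (A ω, B ω)) = entH μ A + entH μ B := by
  rw [entH_eq, entH_eq, entH_eq, Fintype.sum_prod_type]
  have : ∀ s : S, ∑ t : T, Real.negMulLog (pm μ (fun ω => (A ω, B ω)) (s, t))
      = Real.negMulLog (pm μ A s) + pm μ A s * entH μ B := by
    intro s
    calc ∑ t : T, Real.negMulLog (pm μ (fun ω => (A ω, B ω)) (s, t))
        = ∑ t : T, (pm μ B t * Real.negMulLog (pm μ A s)
            + pm μ A s * Real.negMulLog (pm μ B t)) := by
          refine Finset.sum_congr rfl fun t _ => ?_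
          rw [hprod s t, Real.negMulLog_mul]
      _ = Real.negMulLog (pm μ A s) + pm μ A s * entH μ B := by
          rw [Finset.sum_add_distrib, ← Finset.sum_mul, sum_pm μ B hB, one_mul,
            ← Finset.mul_sum, entH_eq]
  rw [Finset.sum_congr rfl fun s _ => this s, Finset.sum_add_distrib, ← Finset.sum_mul,
    sum_pm μ A hA, one_mul, entH_eq]

/-- Entropy of a tuple with product pmf equals the sum of entropies. -/
lemma entH_tuple_add (μ : Measure Ω) [IsProbabilityMeasure μ] :
    ∀ (n : ℕ) (𝓤 : Fin n → Type u_5) (_ : ∀ j, Fintype (𝓤 j))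
      (_ : ∀ j, MeasurableSpace (𝓤 j)) (_ : ∀ j, MeasurableSingletonClass (𝓤 j))
      (F : ∀ j, Ω → 𝓤 j) (_ : ∀ j, Measurable (F j))
      (_ : ∀ u : ∀ j, 𝓤 j, pm μ (fun ω (j : Fin n) => F j ω) u = ∏ j, pm μ (F j) (u j)),
      entH μ (fun ω (j : Fin n) => F j ω) = ∑ j, entH μ (F j) := by
  intro n
  induction n with
  | zero =>
    intro 𝓤 _ _ _ F hF hprod
    rw [Finset.univ_eq_empty, Finset.sum_empty, entH_eq]
    have huniq : ∀ u : (∀ j : Fin 0, 𝓤 j), pm μ (fun ω (j : Fin 0) => F j ω) u = 1 := by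
      intro u
      have : ((fun ω (j : Fin 0) => F j ω) ⁻¹' {u}) = Set.univ := by
        ext ω
        simp only [Set.mem_preimage, Set.mem_singleton_iff, Set.mem_univ, iff_true]
        exact funext fun j => j.elim0
      simp [pm, this]
    rw [Finset.sum_congr rfl fun u _ => by rw [huniq u]]
    simp
  | succ n ih =>
    intro 𝓤 i1 i2 i3 F hF hprod
    set tail : Ω → (∀ i : Fin n, 𝓤 i.succ) := fun ω i => F i.succ ω with htail
    have htailm : Measurable tail := measurable_pi_lambda _ (fun i => hF i.succ)
    have hpairpm : ∀ (a : 𝓤 0) (t : ∀ i : Fin n, 𝓤 i.succ),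
        pm μ (fun ω => (F 0 ω, tail ω)) (a, t)
          = pm μ (F 0) a * ∏ i : Fin n, pm μ (F i.succ) (t i) := by
      intro a t
      have hset : ((fun ω => (F 0 ω, tail ω)) ⁻¹' {(a, t)})
          = ((fun ω (j : Fin (n+1)) => F j ω) ⁻¹' {Fin.cons a t}) := by
        ext ω
        simp only [Set.mem_preimage, Set.mem_singleton_iff, Prod.mk.injEq]
        constructor
        · rintro ⟨h0, hs⟩
          funext j
          refine Fin.cases ?_ ?_ j
          · simpa using h0
          · intro i
            have := congrFun hs i
            simpa using this
        · intro h
          have h0 := congrFun h 0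
          simp only [Fin.cons_zero] at h0
          refine ⟨h0, funext fun i => ?_⟩
          have := congrFun h i.succ
          simpa using this
      have hpm : pm μ (fun ω => (F 0 ω, tail ω)) (a, t)
          = pm μ (fun ω (j : Fin (n+1)) => F j ω) (Fin.cons a t) := by
        simp only [pm]; rw [hset]
      rw [hpm, hprod (Fin.cons a t), Fin.prod_univ_succ]
      simp
    have htailpm : ∀ t : (∀ i : Fin n, 𝓤 i.succ),
        pm μ tail t = ∏ i : Fin n, pm μ (F i.succ) (t i) := by
      intro t
      have hfst := pm_fst μ tail htailm (F 0) (hF 0) t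
      have hswap : ∀ a : 𝓤 0, pm μ (fun ω => (tail ω, F 0 ω)) (t, a)
          = pm μ (fun ω => (F 0 ω, tail ω)) (a, t) := by
        intro a
        have : ((fun ω => (tail ω, F 0 ω)) ⁻¹' {(t, a)})
            = ((fun ω => (F 0 ω, tail ω)) ⁻¹' {(a, t)}) := by
          ext ω
          simp only [Set.mem_preimage, Set.mem_singleton_iff, Prod.mk.injEq]
          tauto
        rw [pm, this]; rfl
      rw [hfst]
      calc ∑ a : 𝓤 0, pm μ (fun ω => (tail ω, F 0 ω)) (t, a)
          = ∑ a : 𝓤 0, pm μ (F 0) a * ∏ i : Fin n, pm μ (F i.succ) (t i) := by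
            refine Finset.sum_congr rfl fun a _ => ?_
            rw [hswap a, hpairpm a t]
        _ = ∏ i : Fin n, pm μ (F i.succ) (t i) := by
            rw [← Finset.sum_mul, sum_pm μ (F 0) (hF 0), one_mul]
    have hrecode : entH μ (fun ω (j : Fin (n+1)) => F j ω)
        = entH μ (fun ω => (F 0 ω, tail ω)) := by
      have hg : Function.Injective
          (fun u : (∀ j : Fin (n+1), 𝓤 j) => (u 0, fun i : Fin n => u i.succ)) := by
        intro u v huv
        obtain ⟨h0, hs⟩ := Prod.ext_iff.1 huv
        funext j
        refine Fin.cases ?_ ?_ j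
        · exact h0
        · intro i; exact congrFun hs i
      have := entH_comp_inj μ (fun ω (j : Fin (n+1)) => F j ω)
        (measurable_pi_lambda _ (fun j => hF j)) _ hg
      exact this.symm
    rw [hrecode, entH_pair_add μ (F 0) (hF 0) tail htailm
      (fun a t => by rw [hpairpm a t, htailpm t]), Fin.sum_univ_succ]
    congr 1
    exact ih (fun i => 𝓤 i.succ) (fun i => i1 i.succ) (fun i => i2 i.succ) (fun i => i3 i.succ)
      (fun i => F i.succ) (fun i => hF i.succ) (fun t => htailpm t)

end Layer4


section Layer5
open Real
open scoped Classical
variable {Ω : Type*} [MeasurableSpace Ω] (μ : Measure Ω) [IsProbabilityMeasure μ]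
variable {S T R V : Type*} [Fintype S] [MeasurableSpace S] [MeasurableSingletonClass S]
  [Fintype T] [MeasurableSpace T] [MeasurableSingletonClass T]
  [Fintype R] [MeasurableSpace R] [MeasurableSingletonClass R]
  [Fintype V] [MeasurableSpace V] [MeasurableSingletonClass V]

/-- Conditional independence given `X` makes conditional entropy additive. -/
lemma condEntH_tuple_eq_sum {n : ℕ} {𝓤 : Fin n → Type*} [∀ j, Fintype (𝓤 j)]
    [∀ j, MeasurableSpace (𝓤 j)] [∀ j, MeasurableSingletonClass (𝓤 j)]
    (X : Ω → S) (hX : Measurable X) (U : ∀ j, Ω → 𝓤 j) (hU : ∀ j, Measurable (U j))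
    (hb : ∀ x : S, μ (X ⁻¹' {x}) ≠ 0 →
      iIndepFun U (μ[|X ⁻¹' {x}])) :
    condEntH μ (fun ω (j : Fin n) => U j ω) X = ∑ j, condEntH μ (U j) X := by
  rw [condEntH_decomp μ X hX _ (measurable_pi_lambda _ hU)]
  rw [Finset.sum_congr rfl fun j (_ : j ∈ Finset.univ) => condEntH_decomp μ X hX (U j) (hU j),
    Finset.sum_comm]
  refine Finset.sum_congr rfl fun x _ => ?_
  rw [← Finset.mul_sum]
  by_cases h : μ (X ⁻¹' {x}) = 0
  · have : pm μ X x = 0 := by simp [pm, h]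
    rw [this, zero_mul, zero_mul]
  · congr 1
    haveI := cond_isProbabilityMeasure (μ := μ) h
    refine entH_tuple_add (μ[|X ⁻¹' {x}]) n 𝓤 (fun j => inferInstance) (fun j => inferInstance)
      (fun j => inferInstance) U hU ?_
    intro u
    have hind := hb x h
    rw [iIndepFun_iff_measure_inter_preimage_eq_mul] at hind
    have hmeas := hind Finset.univ (sets := fun j => {u j})
      (fun j _ => measurableSet_singleton _)
    have hset : (⋂ j ∈ Finset.univ, U j ⁻¹' {u j})
        = ((fun ω (j : Fin n) => U j ω) ⁻¹' {u}) := by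
      ext ω
      simp only [Set.mem_iInter, Set.mem_preimage, Set.mem_singleton_iff, Finset.mem_univ,
        forall_const]
      exact ⟨fun hh => funext hh, fun hh j => congrFun hh j⟩
    rw [hset] at hmeas
    rw [pm, hmeas, ENNReal.toReal_prod]
    rfl

lemma pm_cond_of_indep (C : Ω → R) (hC : Measurable C) (D : Ω → V) (hD : Measurable D)
    (hCD : IndepFun C D μ) {c : R} (hc : μ (C ⁻¹' {c}) ≠ 0) (g : V → T) (t : T) :
    pm (μ[|C ⁻¹' {c}]) (fun ω => g (D ω)) t = pm μ (fun ω => g (D ω)) t := by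
  have hBm : MeasurableSet (g ⁻¹' {t} : Set V) := (Set.toFinite _).measurableSet
  have hev : ((fun ω => g (D ω)) ⁻¹' {t}) = D ⁻¹' (g ⁻¹' {t}) := rfl
  rw [pm, pm, hev, cond_apply (hC (measurableSet_singleton c)),
    hCD.measure_inter_preimage_eq_mul {c} (g ⁻¹' {t}) (measurableSet_singleton c) hBm,
    ← mul_assoc, ENNReal.inv_mul_cancel hc (measure_ne_top μ _), one_mul]

lemma entH_cond_of_indep (C : Ω → R) (hC : Measurable C) (D : Ω → V) (hD : Measurable D)
    (hCD : IndepFun C D μ) {c : R} (hc : μ (C ⁻¹' {c}) ≠ 0) (g : V → T) :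
    entH (μ[|C ⁻¹' {c}]) (fun ω => g (D ω)) = entH μ (fun ω => g (D ω)) := by
  rw [entH_eq, entH_eq]
  exact Finset.sum_congr rfl fun t _ => by
    rw [pm_cond_of_indep μ C hC D hD hCD hc g t]

lemma condEntH_cond_of_indep (C : Ω → R) (hC : Measurable C) (D : Ω → V) (hD : Measurable D)
    (hCD : IndepFun C D μ) {c : R} (hc : μ (C ⁻¹' {c}) ≠ 0) (g : V → T) (h : V → S) :
    condEntH (μ[|C ⁻¹' {c}]) (fun ω => g (D ω)) (fun ω => h (D ω))
      = condEntH μ (fun ω => g (D ω)) (fun ω => h (D ω)) := by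
  unfold condEntH
  have h1 : (fun ω => (h (D ω), g (D ω))) = fun ω => (fun v => (h v, g v)) (D ω) := rfl
  rw [h1, entH_cond_of_indep μ C hC D hD hCD hc (fun v => (h v, g v)),
    entH_cond_of_indep μ C hC D hD hCD hc h]

end Layer5

/-- **Geometric contraction with effective channels.**
Under the independent evidence-bits model (sufficiency, conditional independence given `X`,
matching uncertainty scale) and the fractional-coverage model (coverage indicators `C`
independent of `(X, Y, U)`, each with probability `α`, independent across channels for each
fixed bit, and a covered bit has zero residual entropy), the expected residual uncertainty
satisfies `E_c[H(Y | X, Z̃)] ≤ (1 − α)^K · H(Y | X) ≤ e^{−αK} · H(Y | X)`. -/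
theorem geometric_contraction_effective_channels
    {Ω : Type*} [MeasurableSpace Ω] (μ : Measure Ω) [IsProbabilityMeasure μ]
    {𝓧 𝓨 : Type*} [Fintype 𝓧] [Nonempty 𝓧] [Fintype 𝓨] [Nonempty 𝓨]
    [MeasurableSpace 𝓧] [DiscreteMeasurableSpace 𝓧]
    [MeasurableSpace 𝓨] [DiscreteMeasurableSpace 𝓨]
    {M K : ℕ} (hM : 0 < M) (hK : 0 < K)
    {𝓤 : Fin M → Type*} [∀ j, Fintype (𝓤 j)] [∀ j, Nonempty (𝓤 j)]
    [∀ j, MeasurableSpace (𝓤 j)] [∀ j, DiscreteMeasurableSpace (𝓤 j)]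
    {𝓩 : Fin K → Type*} [∀ k, Fintype (𝓩 k)] [∀ k, Nonempty (𝓩 k)]
    [∀ k, MeasurableSpace (𝓩 k)] [∀ k, DiscreteMeasurableSpace (𝓩 k)]
    (X : Ω → 𝓧) (Y : Ω → 𝓨) (U : ∀ j, Ω → 𝓤 j) (Ztil : ∀ k, Ω → 𝓩 k)
    (C : Ω → (Fin M → Fin K → Bool))
    (hX : Measurable X) (hY : Measurable Y) (hU : ∀ j, Measurable (U j))
    (hZtil : ∀ k, Measurable (Ztil k)) (hC : Measurable C)
    {α : ℝ} (hα : α ∈ Set.Ioo (0 : ℝ) 1)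
    -- (a) sufficiency: H(Y | X, U) = 0
    (ha : condEntH μ Y (fun ω => (X ω, fun j => U j ω)) = 0)
    -- (b) the U_j are mutually conditionally independent given X
    (hb : ∀ x : 𝓧, μ (X ⁻¹' {x}) ≠ 0 →
        iIndepFun U (μ[|X ⁻¹' {x}]))
    -- (c) matching uncertainty scale: H(U | X) = H(Y | X)
    (hc : condEntH μ (fun ω (j : Fin M) => U j ω) X = condEntH μ Y X)
    -- (d) coverage indicators: independent of (X, Y, U), each of probability α,
    --     and independent across channels for each fixed bit j
    (hd1 : IndepFun C (fun ω => (X ω, Y ω, fun j => U j ω)) μ)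
    (hd2 : ∀ j k, μ {ω | C ω j k = true} = ENNReal.ofReal α)
    (hd3 : ∀ j : Fin M, iIndepFun (fun k ω => C ω j k) μ)
    -- (e) a covered bit has zero residual entropy given (X, Z̃)
    (he : ∀ c : Fin M → Fin K → Bool, μ (C ⁻¹' {c}) ≠ 0 → ∀ j : Fin M,
        (∃ k, c j k = true) →
        condEntH (μ[|C ⁻¹' {c}]) (U j) (fun ω => (X ω, fun k => Ztil k ω)) = 0) :
    (∑ c : Fin M → Fin K → Bool, (μ (C ⁻¹' {c})).toReal *
        condEntH (μ[|C ⁻¹' {c}]) Y (fun ω => (X ω, fun k => Ztil k ω)))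
      ≤ (1 - α) ^ K * condEntH μ Y X ∧
    (1 - α) ^ K * condEntH μ Y X ≤ Real.exp (-(α * K)) * condEntH μ Y X := by
  classical
  obtain ⟨hα0, hα1⟩ := hα
  have hZtm : Measurable (fun ω (k : Fin K) => Ztil k ω) := measurable_pi_lambda _ hZtil
  have hUtm : Measurable (fun ω (j : Fin M) => U j ω) := measurable_pi_lambda _ hU
  have hXZm : Measurable (fun ω => (X ω, fun k => Ztil k ω)) := hX.prodMk hZtm
  have hHYX0 : 0 ≤ condEntH μ Y X := condEntH_nonneg μ Y hY X hX
  have hsumU : condEntH μ (fun ω (j : Fin M) => U j ω) X = ∑ j, condEntH μ (U j) X :=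
    condEntH_tuple_eq_sum μ X hX U hU hb
  have hsecond : (1 - α) ^ K * condEntH μ Y X ≤ Real.exp (-(α * K)) * condEntH μ Y X := by
    refine mul_le_mul_of_nonneg_right ?_ hHYX0
    have h1 : (1 - α) ≤ Real.exp (-α) := by
      have := Real.add_one_le_exp (-α); linarith
    calc (1 - α) ^ K ≤ (Real.exp (-α)) ^ K := pow_le_pow_left₀ (by linarith) h1 K
      _ = Real.exp (-(α * K)) := by
          rw [← Real.exp_nat_mul]; ring_nf
  refine ⟨?_, hsecond⟩
  have hmaskm : ∀ (c : Fin M → Fin K → Bool),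
      Measurable (fun ω (j : Fin M) =>
        if (∃ k, c j k = true) then U j ω else Classical.arbitrary (𝓤 j)) := by
    intro c
    apply measurable_pi_lambda
    intro j
    by_cases hcov : ∃ k, c j k = true
    · simpa [hcov] using hU j
    · simp only [if_neg hcov]; exact measurable_const
  -- per-configuration bound
  have key : ∀ c : Fin M → Fin K → Bool,
      (μ (C ⁻¹' {c})).toReal * condEntH (μ[|C ⁻¹' {c}]) Y (fun ω => (X ω, fun k => Ztil k ω))
        ≤ (μ (C ⁻¹' {c})).toReal *
          ∑ j, (if ∃ k, c j k = true then 0 else condEntH μ (U j) X) := by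
    intro c
    by_cases hc0 : μ (C ⁻¹' {c}) = 0
    · rw [cond_of_null μ hc0]
      simp [hc0, condEntH, entH_zero_measure]
    · refine mul_le_mul_of_nonneg_left ?_ ENNReal.toReal_nonneg
      haveI := cond_isProbabilityMeasure (μ := μ) hc0
      set ν := μ[|C ⁻¹' {c}] with hν
      set Vv : Ω → (∀ j, 𝓤 j) := fun ω j =>
        if (∃ k, c j k = true) then U j ω else Classical.arbitrary (𝓤 j) with hVv
      have hVm : Measurable Vv := hmaskm c
      have step1 : condEntH ν Y (fun ω => (X ω, fun k => Ztil k ω))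
          ≤ condEntH ν Vv (fun ω => (X ω, fun k => Ztil k ω))
            + condEntH ν Y (fun ω => ((X ω, fun k => Ztil k ω), Vv ω)) :=
        condEntH_le_add ν Y hY Vv hVm _ hXZm
      have step2 : condEntH ν Vv (fun ω => (X ω, fun k => Ztil k ω)) ≤ 0 := by
        have hsub := condEntH_tuple_le_sum ν M 𝓤 (fun j => inferInstance)
          (fun j => inferInstance) (fun j => inferInstance) (fun j ω => Vv ω j)
          (fun j => (measurable_pi_apply j).comp hVm) _ hXZm
        have hterm : ∀ j : Fin M,
            condEntH ν (fun ω => Vv ω j) (fun ω => (X ω, fun k => Ztil k ω)) = 0 := by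
          intro j
          by_cases hcov : ∃ k, c j k = true
          · have hUj : (fun ω => Vv ω j) = U j := by
              funext ω; simp [hVv, hcov]
            rw [hUj]
            exact he c hc0 j hcov
          · exact condEntH_eq_zero_of_fun ν _ _ hXZm (fun _ => Classical.arbitrary (𝓤 j))
              (fun ω => by simp [hVv, hcov])
        calc condEntH ν Vv (fun ω => (X ω, fun k => Ztil k ω))
            ≤ ∑ j, condEntH ν (fun ω => Vv ω j) (fun ω => (X ω, fun k => Ztil k ω)) := hsub
          _ = 0 := by rw [Finset.sum_congr rfl fun j _ => hterm j]; simp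
      have step3 : condEntH ν Y (fun ω => ((X ω, fun k => Ztil k ω), Vv ω))
          ≤ condEntH ν Y (fun ω => (X ω, Vv ω)) := by
        have hrec : condEntH ν Y (fun ω => ((X ω, fun k => Ztil k ω), Vv ω))
            = condEntH ν Y (fun ω => ((X ω, Vv ω), fun k => Ztil k ω)) := by
          have h1 : (fun ω => ((X ω, fun k => Ztil k ω), Vv ω))
              = fun ω => (fun p : (𝓧 × (∀ j, 𝓤 j)) × (∀ k, 𝓩 k) => ((p.1.1, p.2), p.1.2))
                  (((X ω, Vv ω), fun k => Ztil k ω)) := rfl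
          rw [h1]
          exact condEntH_comp_right ν Y hY
            (fun ω => ((X ω, Vv ω), fun k => Ztil k ω)) ((hX.prodMk hVm).prodMk hZtm)
            (fun p : (𝓧 × (∀ j, 𝓤 j)) × (∀ k, 𝓩 k) => ((p.1.1, p.2), p.1.2))
            (fun p q hpq => by
              obtain ⟨h1, h2⟩ := Prod.ext_iff.1 hpq
              obtain ⟨h11, h12⟩ := Prod.ext_iff.1 h1
              exact Prod.ext (Prod.ext h11 h2) h12)
        rw [hrec]
        exact condEntH_pair_le ν Y hY (fun ω => (X ω, Vv ω)) (hX.prodMk hVm)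
          (fun ω (k : Fin K) => Ztil k ω) hZtm
      have step4 : condEntH ν Y (fun ω => (X ω, Vv ω))
          = condEntH μ Y (fun ω => (X ω, Vv ω)) := by
        have htrans := condEntH_cond_of_indep μ C hC (fun ω => (X ω, Y ω, fun j => U j ω))
          (hX.prodMk (hY.prodMk hUtm)) hd1 hc0
          (fun d => d.2.1)
          (fun d => (d.1, fun j =>
            if (∃ k, c j k = true) then d.2.2 j else Classical.arbitrary (𝓤 j)))
        exact htrans
      have step5 : condEntH μ Y (fun ω => (X ω, Vv ω))
          ≤ condEntH μ (fun ω (j : Fin M) => U j ω) (fun ω => (X ω, Vv ω))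
            + condEntH μ Y (fun ω => ((X ω, Vv ω), fun j => U j ω)) :=
        condEntH_le_add μ Y hY _ hUtm _ (hX.prodMk hVm)
      have step6 : condEntH μ Y (fun ω => ((X ω, Vv ω), fun j => U j ω)) = 0 := by
        have hrec : condEntH μ Y (fun ω => ((X ω, Vv ω), fun j => U j ω))
            = condEntH μ Y (fun ω => (X ω, fun j => U j ω)) := by
          have h1 : (fun ω => ((X ω, Vv ω), fun j => U j ω))
              = fun ω => (fun p : 𝓧 × (∀ j, 𝓤 j) =>
                  ((p.1, fun j => if (∃ k, c j k = true) then p.2 j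
                    else Classical.arbitrary (𝓤 j)), p.2))
                  ((X ω, fun j => U j ω)) := by
            funext ω
            simp only [hVv]
          rw [h1]
          exact condEntH_comp_right μ Y hY
            (fun ω => (X ω, fun j => U j ω)) (hX.prodMk hUtm)
            (fun p : 𝓧 × (∀ j, 𝓤 j) =>
              ((p.1, fun j => if (∃ k, c j k = true) then p.2 j
                else Classical.arbitrary (𝓤 j)), p.2))
            (fun p q hpq => by
              obtain ⟨h1, h2⟩ := Prod.ext_iff.1 hpq
              obtain ⟨h11, _⟩ := Prod.ext_iff.1 h1
              exact Prod.ext h11 h2)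
        rw [hrec]; exact ha
      have step7 : condEntH μ (fun ω (j : Fin M) => U j ω) (fun ω => (X ω, Vv ω))
          ≤ ∑ j, condEntH μ (U j) (fun ω => (X ω, Vv ω)) :=
        condEntH_tuple_le_sum μ M 𝓤 (fun j => inferInstance) (fun j => inferInstance)
          (fun j => inferInstance) U hU _ (hX.prodMk hVm)
      have step8 : ∀ j : Fin M, condEntH μ (U j) (fun ω => (X ω, Vv ω))
          ≤ (if ∃ k, c j k = true then 0 else condEntH μ (U j) X) := by
        intro j
        by_cases hcov : ∃ k, c j k = true
        · rw [if_pos hcov]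
          exact le_of_eq (condEntH_eq_zero_of_fun μ (U j) _ (hX.prodMk hVm)
            (fun p => p.2 j) (fun ω => by simp [hVv, hcov]))
        · rw [if_neg hcov]
          exact condEntH_pair_le μ (U j) (hU j) X hX Vv hVm
      have hsum8 := Finset.sum_le_sum (fun j (_ : j ∈ Finset.univ) => step8 j)
      linarith [step1, step2, step3, step5, step6, step7, hsum8]
  -- probability that bit j is uncovered
  have huncov : ∀ j : Fin M,
      ∑ c ∈ Finset.univ.filter (fun c : Fin M → Fin K → Bool => ∀ k, c j k = false),
        (μ (C ⁻¹' {c})).toReal = (1 - α) ^ K := by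
    intro j
    have hCkm : ∀ k, Measurable (fun ω => C ω j k) := fun k =>
      (measurable_pi_apply k).comp ((measurable_pi_apply j).comp hC)
    have hset : (C ⁻¹'
        ↑(Finset.univ.filter (fun c : Fin M → Fin K → Bool => ∀ k, c j k = false)))
        = ⋂ k ∈ Finset.univ, (fun ω => C ω j k) ⁻¹' ({false} : Set Bool) := by
      ext ω
      simp only [Set.mem_preimage, Finset.coe_filter, Set.mem_setOf_eq, Finset.mem_univ,
        true_and, Set.mem_iInter, Set.mem_singleton_iff, forall_const]
    have hfalse : ∀ k : Fin K, μ ((fun ω => C ω j k) ⁻¹' ({false} : Set Bool))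
        = 1 - ENNReal.ofReal α := by
      intro k
      have hcompl : ((fun ω => C ω j k) ⁻¹' ({false} : Set Bool))
          = ((fun ω => C ω j k) ⁻¹' ({true} : Set Bool))ᶜ := by
        ext ω
        simp only [Set.mem_preimage, Set.mem_singleton_iff, Set.mem_compl_iff]
        cases h : C ω j k <;> simp
      have hmeas : MeasurableSet ((fun ω => C ω j k) ⁻¹' ({true} : Set Bool)) :=
        hCkm k (measurableSet_singleton true)
      rw [hcompl, prob_compl_eq_one_sub hmeas]
      congr 1
      exact hd2 j k
    have hind := hd3 j
    rw [iIndepFun_iff_measure_inter_preimage_eq_mul] at hind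
    have hmeasI := hind Finset.univ (sets := fun _ => ({false} : Set Bool))
      (fun k _ => measurableSet_singleton _)
    have hfs := pm_fin_sum μ C hC
      (Finset.univ.filter (fun c : Fin M → Fin K → Bool => ∀ k, c j k = false))
    simp only [pm] at hfs
    rw [← hfs, hset, hmeasI, Finset.prod_congr rfl fun k _ => hfalse k, Finset.prod_const,
      Finset.card_univ, Fintype.card_fin, ENNReal.toReal_pow,
      ENNReal.toReal_sub_of_le (ENNReal.ofReal_le_one.2 hα1.le) ENNReal.one_ne_top,
      ENNReal.toReal_one, ENNReal.toReal_ofReal hα0.le]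
  calc (∑ c : Fin M → Fin K → Bool, (μ (C ⁻¹' {c})).toReal *
        condEntH (μ[|C ⁻¹' {c}]) Y (fun ω => (X ω, fun k => Ztil k ω)))
      ≤ ∑ c : Fin M → Fin K → Bool, (μ (C ⁻¹' {c})).toReal *
          ∑ j, (if ∃ k, c j k = true then 0 else condEntH μ (U j) X) :=
        Finset.sum_le_sum fun c _ => key c
    _ = ∑ j, ∑ c : Fin M → Fin K → Bool, (μ (C ⁻¹' {c})).toReal *
          (if ∃ k, c j k = true then 0 else condEntH μ (U j) X) := by
        rw [Finset.sum_congr rfl fun c (_ : c ∈ Finset.univ) =>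
          Finset.mul_sum Finset.univ _ (μ (C ⁻¹' {c})).toReal, Finset.sum_comm]
    _ = ∑ j, (1 - α) ^ K * condEntH μ (U j) X := by
        refine Finset.sum_congr rfl fun j _ => ?_
        have hsw : ∀ c : Fin M → Fin K → Bool,
            (μ (C ⁻¹' {c})).toReal * (if ∃ k, c j k = true then 0 else condEntH μ (U j) X)
            = (if ∀ k, c j k = false
                then (μ (C ⁻¹' {c})).toReal * condEntH μ (U j) X else 0) := by
          intro c
          by_cases hcov : ∃ k, c j k = true
          · have hnall : ¬ ∀ k, c j k = false := by
              obtain ⟨k, hk⟩ := hcov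
              intro hall
              rw [hall k] at hk
              exact Bool.false_ne_true hk
            rw [if_pos hcov, if_neg hnall, mul_zero]
          · have hall : ∀ k, c j k = false := by
              intro k
              cases h : c j k
              · rfl
              · exact absurd ⟨k, h⟩ hcov
            rw [if_neg hcov, if_pos hall]
        rw [Finset.sum_congr rfl fun c _ => hsw c, ← Finset.sum_filter, ← Finset.sum_mul,
          huncov j]
    _ = (1 - α) ^ K * ∑ j, condEntH μ (U j) X := by rw [Finset.mul_sum]
    _ = (1 - α) ^ K * condEntH μ Y X := by rw [← hsumU, hc]
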